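/- Let D be an ∞-category, X a presentable ∞-category, and X̃ any reflective localization of Cat^k(X), the ∞-category of k-uple category objects in X (for example X̃ = Seg_k(X), or X̃ = CSS_k(X) when X is an ∞-topos). Then a functor F : D → X̃, d ↦ F(d)_{(•,…,•)}, preserves small limits if and only if each of the composite functors D → X, d ↦ F(d)_{(i₁,…,i_k)}, obtained by evaluating at (i₁,…,i_k) ∈ Δ^k with 0 ≤ i₁,…,i_k ≤ 1, preserves small limits. -/

import Mathlib

/-!
STATEMENT 9 (1-categorical model).

Multisimplicial objects, `k`-uple category objects (Segal conditions in each
direction, expressed by pullback squares), `k`-fold Segal objects and complete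
`k`-fold Segal objects are modelled inside an arbitrary category.  A
presentable category is modelled as a reflective localization of a presheaf
category, and `X̃` is an arbitrary reflective localization of `Cat^k(X)`.
The claim: a functor `F : D ⥤ X̃` preserves small limits iff each of the
composites with the evaluations at the multi-indices `(i₁, …, i_k)` with
`0 ≤ i₁, …, i_k ≤ 1` preserves small limits.
-/

open CategoryTheory CategoryTheory.Limits Opposite

universe u

/-- A multi-index for `k`-fold multisimplicial objects: an object of `Δ^k`. -/
abbrev MultiIndex (k : ℕ) := Fin k → SimplexCategory

/-- The morphism of `Δ^k` which is `f` in the `i`-th coordinate and the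
identity elsewhere. -/
def piHom {k : ℕ} (m : MultiIndex k) (i : Fin k) {a b : SimplexCategory}
    (f : a ⟶ b) : (Function.update m i a : MultiIndex k) ⟶ Function.update m i b :=
  fun j =>
    if h : j = i then
      eqToHom (by rw [h]; simp) ≫ f ≫ eqToHom (by rw [h]; simp)
    else
      eqToHom (by rw [Function.update_of_ne h, Function.update_of_ne h])

/-- The edge `{n, n+1}` of the simplex `[n+1]`. -/
def lastEdge (n : ℕ) : (SimplexCategory.mk 1) ⟶ SimplexCategory.mk (n + 1) :=
  SimplexCategory.mkOfSucc (Fin.last n)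

/-- A `k`-uple category object: in each simplicial direction the Segal squares
are pullbacks. -/
def IsCatObj {C : Type*} [Category C] {k : ℕ}
    (F : (MultiIndex k)ᵒᵖ ⥤ C) : Prop :=
  ∀ (i : Fin k) (m : MultiIndex k) (n : ℕ),
    IsPullback
      (F.map (piHom m i (SimplexCategory.δ (Fin.last (n + 1)))).op)
      (F.map (piHom m i (lastEdge n)).op)
      (F.map (piHom m i (SimplexCategory.const (SimplexCategory.mk 0)
        (SimplexCategory.mk n) (Fin.last n))).op)
      (F.map (piHom m i (SimplexCategory.const (SimplexCategory.mk 0)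
        (SimplexCategory.mk 1) 0)).op)

/-- A category is presentable if it is a reflective localization of a presheaf
category (accessibility is not recorded in this 1-categorical model). -/
def IsPresentableCategory (X : Type (u + 1)) [Category.{u} X] : Prop :=
  ∃ (S : Type u) (_ : SmallCategory S) (L : (Sᵒᵖ ⥤ Type u) ⥤ X) (R : X ⥤ (Sᵒᵖ ⥤ Type u)),
    Nonempty (L ⊣ R) ∧ Nonempty R.FullyFaithful

section Aux

variable {J : Type u} [Category.{u} J] {D : Type u} [Category.{u} D]
  {X : Type (u + 1)} [Category.{u} X]

/-- If `A` is a pointwise pullback of `B` and `C` over `E`, and `B`, `C`, `E` all send the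
cone `c` to a limit cone, then so does `A`. -/
noncomputable def auxIsLimitOfIsPullback {K : J ⥤ D} {c : Cone K}
    {A B C E : D ⥤ X} (f : A ⟶ B) (g : A ⟶ C) (h : B ⟶ E) (i : C ⟶ E)
    (hpb : ∀ d, IsPullback (f.app d) (g.app d) (h.app d) (i.app d))
    (hB : IsLimit (B.mapCone c)) (hC : IsLimit (C.mapCone c))
    (hE : IsLimit (E.mapCone c)) : IsLimit (A.mapCone c) := by
  have hcomm : ∀ s : Cone (K ⋙ A),
      hB.lift ((Cone.postcompose (Functor.whiskerLeft K f)).obj s) ≫ h.app c.pt =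
      hC.lift ((Cone.postcompose (Functor.whiskerLeft K g)).obj s) ≫ i.app c.pt := by
    intro s
    apply hE.hom_ext
    intro j
    have hfac := hB.fac ((Cone.postcompose (Functor.whiskerLeft K f)).obj s) j
    have gfac := hC.fac ((Cone.postcompose (Functor.whiskerLeft K g)).obj s) j
    simp only [Functor.mapCone_pt, Functor.mapCone_π_app, Cone.postcompose_obj_pt,
      Cone.postcompose_obj_π, NatTrans.comp_app, Functor.whiskerLeft_app, Functor.comp_obj] at hfac gfac ⊢
    simp only [Category.assoc]
    rw [← h.naturality, ← i.naturality, reassoc_of% hfac, reassoc_of% gfac, (hpb (K.obj j)).w]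
  refine IsLimit.mk (fun s => (hpb c.pt).lift
      (hB.lift ((Cone.postcompose (Functor.whiskerLeft K f)).obj s))
      (hC.lift ((Cone.postcompose (Functor.whiskerLeft K g)).obj s)) (hcomm s)) ?_ ?_
  · intro s j
    apply (hpb (K.obj j)).hom_ext
    · have hfac := hB.fac ((Cone.postcompose (Functor.whiskerLeft K f)).obj s) j
      simp only [Functor.mapCone_pt, Functor.mapCone_π_app, Cone.postcompose_obj_pt,
        Cone.postcompose_obj_π, NatTrans.comp_app, Functor.whiskerLeft_app, Functor.comp_obj] at hfac ⊢
      simp only [Category.assoc]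
      rw [f.naturality, reassoc_of% ((hpb c.pt).lift_fst _ _ _), hfac]
    · have gfac := hC.fac ((Cone.postcompose (Functor.whiskerLeft K g)).obj s) j
      simp only [Functor.mapCone_pt, Functor.mapCone_π_app, Cone.postcompose_obj_pt,
        Cone.postcompose_obj_π, NatTrans.comp_app, Functor.whiskerLeft_app, Functor.comp_obj] at gfac ⊢
      simp only [Category.assoc]
      rw [g.naturality, reassoc_of% ((hpb c.pt).lift_snd _ _ _), gfac]
  · intro s mlift hm
    apply (hpb c.pt).hom_ext
    · rw [(hpb c.pt).lift_fst]
      apply hB.hom_ext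
      intro j
      have hfac := hB.fac ((Cone.postcompose (Functor.whiskerLeft K f)).obj s) j
      have hmj := hm j
      simp only [Functor.mapCone_pt, Functor.mapCone_π_app, Cone.postcompose_obj_pt,
        Cone.postcompose_obj_π, NatTrans.comp_app, Functor.whiskerLeft_app, Functor.comp_obj]
        at hfac hmj ⊢
      simp only [Category.assoc]
      rw [← f.naturality, reassoc_of% hmj, hfac]
    · rw [(hpb c.pt).lift_snd]
      apply hC.hom_ext
      intro j
      have gfac := hC.fac ((Cone.postcompose (Functor.whiskerLeft K g)).obj s) j
      have hmj := hm j
      simp only [Functor.mapCone_pt, Functor.mapCone_π_app, Cone.postcompose_obj_pt,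
        Cone.postcompose_obj_π, NatTrans.comp_app, Functor.whiskerLeft_app, Functor.comp_obj]
        at gfac hmj ⊢
      simp only [Category.assoc]
      rw [← g.naturality, reassoc_of% hmj, gfac]

end Aux

section Aux2

variable {k : ℕ} {D : Type u} [Category.{u} D]
  {X : Type (u + 1)} [Category.{u} X] [HasLimits X]

/-- Segal induction step: evaluation at `update m i [n+1]` preserves limits if the
evaluations at `update m i [n]`, `update m i [1]`, `update m i [0]` do. -/
lemma auxStep (G : D ⥤ ((MultiIndex k)ᵒᵖ ⥤ X)) (hG : ∀ d, IsCatObj (G.obj d))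
    (m : MultiIndex k) (i : Fin k) (n : ℕ)
    (h0 : PreservesLimitsOfSize.{u, u}
      (G ⋙ (evaluation _ X).obj (op (Function.update m i (SimplexCategory.mk n)))))
    (h1 : PreservesLimitsOfSize.{u, u}
      (G ⋙ (evaluation _ X).obj (op (Function.update m i (SimplexCategory.mk 1)))))
    (h2 : PreservesLimitsOfSize.{u, u}
      (G ⋙ (evaluation _ X).obj (op (Function.update m i (SimplexCategory.mk 0))))) :
    PreservesLimitsOfSize.{u, u}
      (G ⋙ (evaluation _ X).obj (op (Function.update m i (SimplexCategory.mk (n + 1))))) := by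
  haveI := h0; haveI := h1; haveI := h2
  refine ⟨fun {J} _ => ⟨fun {K} => ⟨fun {c} hc => ?_⟩⟩⟩
  refine ⟨auxIsLimitOfIsPullback
    (A := G ⋙ (evaluation _ X).obj (op (Function.update m i (SimplexCategory.mk (n + 1)))))
    (B := G ⋙ (evaluation _ X).obj (op (Function.update m i (SimplexCategory.mk n))))
    (C := G ⋙ (evaluation _ X).obj (op (Function.update m i (SimplexCategory.mk 1))))
    (E := G ⋙ (evaluation _ X).obj (op (Function.update m i (SimplexCategory.mk 0))))
    (Functor.whiskerLeft G ((evaluation _ X).map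
      (piHom m i (SimplexCategory.δ (Fin.last (n + 1)))).op))
    (Functor.whiskerLeft G ((evaluation _ X).map (piHom m i (lastEdge n)).op))
    (Functor.whiskerLeft G ((evaluation _ X).map
      (piHom m i (SimplexCategory.const (SimplexCategory.mk 0) (SimplexCategory.mk n)
        (Fin.last n))).op))
    (Functor.whiskerLeft G ((evaluation _ X).map
      (piHom m i (SimplexCategory.const (SimplexCategory.mk 0) (SimplexCategory.mk 1)
        0)).op))
    (fun d => hG d i m n)
    (isLimitOfPreserves _ hc) (isLimitOfPreserves _ hc) (isLimitOfPreserves _ hc)⟩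

/-- Evaluation at an arbitrary multi-index preserves limits, given the evaluations at the
multi-indices with all entries `≤ 1`. -/
lemma auxEvalPreserves (G : D ⥤ ((MultiIndex k)ᵒᵖ ⥤ X)) (hG : ∀ d, IsCatObj (G.obj d))
    (hbase : ∀ idx : Fin k → Fin 2,
      PreservesLimitsOfSize.{u, u}
        (G ⋙ (evaluation _ X).obj (op (fun j => SimplexCategory.mk (idx j)))))
    (m : MultiIndex k) :
    PreservesLimitsOfSize.{u, u} (G ⋙ (evaluation _ X).obj (op m)) := by
  have base : ∀ m : MultiIndex k, (∀ j, (m j).len ≤ 1) →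
      PreservesLimitsOfSize.{u, u} (G ⋙ (evaluation _ X).obj (op m)) := by
    intro m hm
    have h2 := hbase fun j => ⟨(m j).len, Nat.lt_succ_of_le (hm j)⟩
    have e : (fun j => SimplexCategory.mk
        (((fun j => (⟨(m j).len, Nat.lt_succ_of_le (hm j)⟩ : Fin 2)) j : ℕ))) = m := by
      funext j
      exact SimplexCategory.mk_len (m j)
    rwa [e] at h2
  suffices H : ∀ (N : ℕ) (m : MultiIndex k), (∑ j, (m j).len) ≤ N →
      PreservesLimitsOfSize.{u, u} (G ⋙ (evaluation _ X).obj (op m)) from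
    H _ m le_rfl
  intro N
  induction N with
  | zero =>
    intro m hm
    refine base m fun j => ?_
    have h : (m j).len ≤ ∑ j, (m j).len := Finset.single_le_sum (f := fun j => (m j).len)
      (fun _ _ => Nat.zero_le _) (Finset.mem_univ j)
    omega
  | succ N ih =>
    intro m hm
    by_cases hsmall : ∀ j, (m j).len ≤ 1
    · exact base m hsmall
    · push_neg at hsmall
      obtain ⟨i, hi⟩ := hsmall
      have hsum : ∀ a : SimplexCategory,
          (∑ j, ((Function.update m i a) j).len) + (m i).len
            = (∑ j, (m j).len) + a.len := by
        intro a
        have e : (fun j => ((Function.update m i a) j).len)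
            = Function.update (fun j => (m j).len) i a.len := by
          funext j
          by_cases hj : j = i
          · subst hj; simp
          · simp [Function.update_of_ne hj]
        rw [e, Finset.sum_update_of_mem (Finset.mem_univ i),
          ← Finset.add_sum_erase _ _ (Finset.mem_univ i), Finset.erase_eq]
        omega
      set n : ℕ := (m i).len - 1 with hn
      have hlen : (m i).len = n + 1 := by omega
      have hmi : m i = SimplexCategory.mk (n + 1) := by
        rw [← hlen]
      have hm' : Function.update m i (SimplexCategory.mk (n + 1)) = m := by
        rw [← hmi]; exact Function.update_eq_self i m
      rw [← hm']
      refine auxStep G hG m i n (ih _ ?_) (ih _ ?_) (ih _ ?_)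
      · have := hsum (SimplexCategory.mk n)
        simp only [SimplexCategory.len_mk] at this
        omega
      · have := hsum (SimplexCategory.mk 1)
        simp only [SimplexCategory.len_mk] at this
        omega
      · have := hsum (SimplexCategory.mk 0)
        simp only [SimplexCategory.len_mk] at this
        omega

end Aux2

theorem continuity_into_reflective_localization_of_k_uple_category_objects
    {k : ℕ} {D : Type u} [Category.{u} D]
    (X : Type (u + 1)) [Category.{u} X] (hXpres : IsPresentableCategory.{u} X)
    [HasLimits X] [HasColimits X]
    -- `X̃` is a reflective localization of `Cat^k(X)`:
    (P : ((MultiIndex k)ᵒᵖ ⥤ X) → Prop)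
    (hP : ∀ F, P F → IsCatObj F)
    (hrefl : Nonempty (Reflective (ObjectProperty.ι P)))
    (F : D ⥤ ObjectProperty.FullSubcategory P) :
    Nonempty (PreservesLimitsOfSize.{u, u} F) ↔
      ∀ idx : Fin k → Fin 2,
        Nonempty (PreservesLimitsOfSize.{u, u}
          (F ⋙ ObjectProperty.ι P ⋙
            (evaluation ((MultiIndex k)ᵒᵖ) X).obj
              (op (fun j => SimplexCategory.mk (idx j))))) := by
  obtain ⟨R⟩ := hrefl
  haveI : Reflective (ObjectProperty.ι P) := R
  haveI : PreservesLimitsOfSize.{u, u} (ObjectProperty.ι P) :=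
    R.adj.rightAdjoint_preservesLimits
  constructor
  · intro hF idx
    haveI := hF.some
    exact ⟨inferInstance⟩
  · intro hidx
    haveI : PreservesLimitsOfSize.{u, u} (F ⋙ ObjectProperty.ι P) :=
      preservesLimits_of_evaluation _ fun mop =>
        auxEvalPreserves (F ⋙ ObjectProperty.ι P)
          (fun d => hP _ (F.obj d).2) (fun idx => (hidx idx).some) mop.unop
    exact ⟨preservesLimits_of_reflects_of_preserves F (ObjectProperty.ι P)⟩
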